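/- arXiv:1305.0363 — 2 statements merged into one kernel-verified Lean document; each statement's English description precedes it below -/
import Mathlib

section
/- If S1 is a metric generator for connected graph G and S2 is a metric generator for connected graph H, then (V(G) × S2) ∪ (S1 × V(H)) is a metric generator for the strong product G ⊠ H. -/
open SimpleGraph

/-- The strong product of two simple graphs. -/
def strongProd {α β : Type*} (G : SimpleGraph α) (H : SimpleGraph β) :
    SimpleGraph (α × β) where
  Adj x y := x ≠ y ∧ (x.1 = y.1 ∨ G.Adj x.1 y.1) ∧ (x.2 = y.2 ∨ H.Adj x.2 y.2)
  symm := by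
    refine ⟨?_⟩
    rintro ⟨a, b⟩ ⟨c, d⟩ ⟨hne, h1, h2⟩
    refine ⟨hne.symm, ?_, ?_⟩
    · rcases h1 with h | h
      · exact Or.inl h.symm
      · exact Or.inr h.symm
    · rcases h2 with h | h
      · exact Or.inl h.symm
      · exact Or.inr h.symm
  loopless := by refine ⟨?_⟩; rintro ⟨a, b⟩ ⟨hne, -, -⟩; exact hne rfl

/-- A set `S` is a metric generator for `G` if every pair of distinct vertices is
distinguished by some element of `S`. -/
def IsMetricGen {α : Type*} (G : SimpleGraph α) (S : Set α) : Prop :=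
  ∀ x y : α, x ≠ y → ∃ s ∈ S, G.dist x s ≠ G.dist y s

/-- The metric dimension of a graph: minimum cardinality of a metric generator. -/
noncomputable def metricDim {α : Type*} (G : SimpleGraph α) : ℕ :=
  sInf {n | ∃ S : Set α, IsMetricGen G S ∧ S.ncard = n}

/-- `G` is self `k`-resolved if for all distinct `x, y` there is `w` such that
`d(y,w) ≥ k` and `x` lies on a shortest `y`–`w` path, or symmetrically. -/
def SelfResolved {α : Type*} (G : SimpleGraph α) (k : ℕ) : Prop :=
  ∀ x y : α, x ≠ y → ∃ w : α,
    (k ≤ G.dist y w ∧ G.dist y x + G.dist x w = G.dist y w) ∨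
    (k ≤ G.dist x w ∧ G.dist x y + G.dist y w = G.dist x w)

/-- Two vertices are true twins if their closed neighborhoods coincide. -/
def TrueTwins {α : Type*} (G : SimpleGraph α) (u v : α) : Prop :=
  insert u (G.neighborSet u) = insert v (G.neighborSet v)

/-- The number of equivalence classes of the true twin relation. -/
noncomputable def numTrueTwinClasses {α : Type*} (G : SimpleGraph α) : ℕ :=
  Nat.card (Quotient (Setoid.ker (fun v => insert v (G.neighborSet v))))


namespace StrongProdAux

variable {α β : Type*} {G : SimpleGraph α} {H : SimpleGraph β}

lemma liftH (a : α) {b d : β} (q : H.Walk b d) :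
    ∃ w : (strongProd G H).Walk (a, b) (a, d), w.length = q.length := by
  induction q with
  | nil => exact ⟨.nil, rfl⟩
  | @cons b b' d h q ih =>
    obtain ⟨w, hw⟩ := ih
    have hne : (a, b) ≠ (a, b') := fun hc => by cases hc; exact H.irrefl h
    exact ⟨.cons (show (strongProd G H).Adj (a, b) (a, b') from ⟨hne, Or.inl rfl, Or.inr h⟩) w, by simp [hw]⟩

lemma liftG (b : β) {a c : α} (p : G.Walk a c) :
    ∃ w : (strongProd G H).Walk (a, b) (c, b), w.length = p.length := by
  induction p with
  | nil => exact ⟨.nil, rfl⟩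
  | @cons a a' c h p ih =>
    obtain ⟨w, hw⟩ := ih
    have hne : (a, b) ≠ (a', b) := fun hc => by cases hc; exact G.irrefl h
    exact ⟨.cons (show (strongProd G H).Adj (a, b) (a', b) from ⟨hne, Or.inr h, Or.inl rfl⟩) w, by simp [hw]⟩

lemma zipWalk {a c : α} {d : β} (p : G.Walk a c) :
    ∀ {b : β} (q : H.Walk b d),
      ∃ w : (strongProd G H).Walk (a, b) (c, d), w.length = max p.length q.length := by
  induction p with
  | nil =>
    intro b q
    obtain ⟨w, hw⟩ := liftH (G := G) _ q
    exact ⟨w, by simp [hw]⟩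
  | @cons a a' c h p ih =>
    intro b q
    cases q with
    | nil =>
      obtain ⟨w, hw⟩ := liftG (G := G) (H := H) d (SimpleGraph.Walk.cons h p)
      exact ⟨w, by simp [hw]⟩
    | @cons b b' d h' q =>
      obtain ⟨w, hw⟩ := ih q
      have hne : ((a, b) : α × β) ≠ (a', b') := fun hc => by cases hc; exact G.irrefl h
      refine ⟨.cons (show (strongProd G H).Adj (a, b) (a', b') from ⟨hne, Or.inr h, Or.inr h'⟩) w, ?_⟩
      simp [hw, Nat.succ_max_succ]

lemma projG {x y : α × β} (w : (strongProd G H).Walk x y) :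
    ∃ p : G.Walk x.1 y.1, p.length ≤ w.length := by
  induction w with
  | nil => exact ⟨.nil, le_rfl⟩
  | @cons x u y h w ih =>
    obtain ⟨p, hp⟩ := ih
    rcases h.2.1 with heq | hadj
    · exact ⟨p.copy heq.symm rfl, by simpa using hp.trans (by simp)⟩
    · exact ⟨.cons hadj p, by simpa using hp⟩

lemma projH {x y : α × β} (w : (strongProd G H).Walk x y) :
    ∃ q : H.Walk x.2 y.2, q.length ≤ w.length := by
  induction w with
  | nil => exact ⟨.nil, le_rfl⟩
  | @cons x u y h w ih =>
    obtain ⟨q, hq⟩ := ih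
    rcases h.2.2 with heq | hadj
    · exact ⟨q.copy heq.symm rfl, by simpa using hq.trans (by simp)⟩
    · exact ⟨.cons hadj q, by simpa using hq⟩

lemma dist_eq (hG : G.Connected) (hH : H.Connected) (a c : α) (b d : β) :
    (strongProd G H).dist (a, b) (c, d) = max (G.dist a c) (H.dist b d) := by
  obtain ⟨p, hp⟩ := (hG.preconnected a c).exists_walk_length_eq_dist
  obtain ⟨q, hq⟩ := (hH.preconnected b d).exists_walk_length_eq_dist
  obtain ⟨w, hw⟩ := zipWalk p q
  apply le_antisymm
  · calc (strongProd G H).dist (a, b) (c, d) ≤ w.length := SimpleGraph.dist_le w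
    _ = max (G.dist a c) (H.dist b d) := by rw [hw, hp, hq]
  · have hr : (strongProd G H).Reachable (a, b) (c, d) := ⟨w⟩
    obtain ⟨w', hw'⟩ := hr.exists_walk_length_eq_dist
    obtain ⟨p', hp'⟩ := projG w'
    obtain ⟨q', hq'⟩ := projH w'
    have h1 : G.dist a c ≤ w'.length := le_trans (SimpleGraph.dist_le p') hp'
    have h2 : H.dist b d ≤ w'.length := le_trans (SimpleGraph.dist_le q') hq'
    rw [hw'] at h1 h2
    exact max_le h1 h2

end StrongProdAux

theorem stmt_2 {α β : Type*} (G : SimpleGraph α) (H : SimpleGraph β)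
    (hG : G.Connected) (hH : H.Connected) (S1 : Set α) (S2 : Set β)
    (h1 : IsMetricGen G S1) (h2 : IsMetricGen H S2) :
    IsMetricGen (strongProd G H) ((Set.univ ×ˢ S2) ∪ (S1 ×ˢ Set.univ)) := by
  rintro ⟨a, b⟩ ⟨c, d⟩ hne
  by_cases hbd : b = d
  · subst hbd
    have hac : a ≠ c := fun h => hne (by rw [h])
    obtain ⟨s, hs, hds⟩ := h1 a c hac
    refine ⟨(s, b), Or.inr ⟨hs, trivial⟩, ?_⟩
    rw [StrongProdAux.dist_eq hG hH, StrongProdAux.dist_eq hG hH]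
    simpa [SimpleGraph.dist_self] using hds
  · obtain ⟨t, ht, hdt⟩ := h2 b d hbd
    rcases lt_or_gt_of_ne hdt with hlt | hlt
    · refine ⟨(a, t), Or.inl ⟨trivial, ht⟩, ?_⟩
      rw [StrongProdAux.dist_eq hG hH, StrongProdAux.dist_eq hG hH]
      have h0 : G.dist a a = 0 := by simp
      rw [h0]
      have h2' : H.dist d t ≤ max (G.dist c a) (H.dist d t) := le_max_right _ _
      omega
    · refine ⟨(c, t), Or.inl ⟨trivial, ht⟩, ?_⟩
      rw [StrongProdAux.dist_eq hG hH, StrongProdAux.dist_eq hG hH]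
      have h0 : G.dist c c = 0 := by simp
      rw [h0]
      have h2' : H.dist b t ≤ max (G.dist a c) (H.dist b t) := le_max_right _ _
      omega
end

section
/- Let H be a connected graph of order n2 and let G be a nontrivial connected graph of order n1 with t1 true twin equivalence classes. Then dim(G ⊠ H) ≥ n2·(n1 − t1). -/
open SimpleGraph

-- closed neighborhood of product
lemma closedNbhd_prod {α β : Type*} (G : SimpleGraph α) (H : SimpleGraph β) (a : α) (b : β) :
    insert (a, b) ((strongProd G H).neighborSet (a, b)) =
      (insert a (G.neighborSet a)) ×ˢ (insert b (H.neighborSet b)) := by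
  ext ⟨x, y⟩
  simp only [Set.mem_insert_iff, mem_neighborSet, Set.mem_prod, strongProd, Prod.mk.injEq]
  constructor
  · rintro (⟨rfl, rfl⟩ | ⟨-, h1, h2⟩)
    · simp
    · exact ⟨by tauto, by tauto⟩
  · rintro ⟨h1, h2⟩
    by_cases hxy : (x, y) = (a, b)
    · left; simpa [Prod.ext_iff] using hxy
    · right
      refine ⟨by simpa [Prod.ext_iff, eq_comm] using hxy, by tauto, by tauto⟩

lemma trueTwins_prod {α β : Type*} {G : SimpleGraph α} (H : SimpleGraph β) {a a' : α}
    (h : TrueTwins G a a') (b : β) : TrueTwins (strongProd G H) (a, b) (a', b) := by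
  unfold TrueTwins at *
  rw [closedNbhd_prod, closedNbhd_prod, h]

-- distance equality for true twins
lemma dist_le_of_twins {α : Type*} {G : SimpleGraph α} (hG : G.Connected) {x y s : α}
    (h : TrueTwins G x y) (hs : s ≠ y) : G.dist x s ≤ G.dist y s := by
  obtain ⟨p, hp⟩ := hG.exists_walk_length_eq_dist y s
  cases p with
  | nil => exact absurd rfl hs.symm
  | cons hadj q =>
    rename_i w
    have hw : w ∈ insert x (G.neighborSet x) := by
      rw [h]; exact Set.mem_insert_of_mem _ hadj
    rw [Set.mem_insert_iff] at hw
    rcases hw with rfl | hw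
    · have h1 : q.length + 1 = G.dist y s := by simpa using hp
      have h2 := SimpleGraph.dist_le q
      omega
    · have h1 : q.length + 1 = G.dist y s := by simpa using hp
      have h2 := SimpleGraph.dist_le (SimpleGraph.Walk.cons hw q)
      replace h2 : G.dist x s ≤ q.length + 1 := h2
      omega

lemma dist_eq_of_twins {α : Type*} {G : SimpleGraph α} (hG : G.Connected) {x y s : α}
    (h : TrueTwins G x y) (hsx : s ≠ x) (hsy : s ≠ y) : G.dist x s = G.dist y s :=
  le_antisymm (dist_le_of_twins hG h hsy) (dist_le_of_twins hG (h.symm) hsx)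

lemma strongProd_connected {α β : Type*} {G : SimpleGraph α} {H : SimpleGraph β}
    (hG : G.Connected) (hH : H.Connected) : (strongProd G H).Connected := by
  have hne : Nonempty (α × β) := ⟨⟨hG.nonempty.some, hH.nonempty.some⟩⟩
  refine ⟨fun x y => ?_⟩
  obtain ⟨a, b⟩ := x; obtain ⟨a', b'⟩ := y
  let f : G →g strongProd G H :=
    ⟨fun v => (v, b), by
      intro u v h
      exact ⟨by simp [h.ne], Or.inr h, Or.inl rfl⟩⟩
  let g : H →g strongProd G H :=
    ⟨fun w => (a', w), by
      intro u v h
      exact ⟨by simp [h.ne], Or.inl rfl, Or.inr h⟩⟩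
  have h1 : (strongProd G H).Reachable (a, b) (a', b) := (hG a a').map f
  have h2 : (strongProd G H).Reachable (a', b) (a', b') := (hH b b').map g
  exact h1.trans h2

theorem stmt_11 {α β : Type*} [Fintype α] [Fintype β] [Nontrivial α]
    (G : SimpleGraph α) (H : SimpleGraph β) (hG : G.Connected) (hH : H.Connected) :
    Fintype.card β * (Fintype.card α - numTrueTwinClasses G) ≤
      metricDim (strongProd G H) := by
  classical
  have hP : (strongProd G H).Connected := strongProd_connected hG hH
  set P := strongProd G H with hPdef
  -- the defining set is nonempty (univ is a metric generator)
  have hne : {n | ∃ S : Set (α × β), IsMetricGen P S ∧ S.ncard = n}.Nonempty := by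
    refine ⟨(Set.univ : Set (α × β)).ncard, Set.univ, ?_, rfl⟩
    intro x y hxy
    refine ⟨x, Set.mem_univ x, ?_⟩
    have h0 : P.dist x x = 0 := SimpleGraph.dist_self
    have h1 : 0 < P.dist y x := hP.pos_dist_of_ne (Ne.symm hxy)
    omega
  refine le_csInf hne ?_
  rintro n ⟨S, hSgen, rfl⟩
  -- injectivity of the map from the complement of S
  set Q := Quotient (Setoid.ker (fun v : α => insert v (G.neighborSet v))) with hQdef
  have hinj : Function.Injective
      (fun p : (Sᶜ : Set (α × β)) =>
        ((Quotient.mk _ p.1.1 : Q), p.1.2)) := by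
    rintro ⟨⟨a, b⟩, hab⟩ ⟨⟨a', b'⟩, hab'⟩ h
    simp only [Prod.mk.injEq] at h
    obtain ⟨hq, rfl⟩ := h
    have htw : TrueTwins G a a' := Quotient.eq''.mp hq
    by_cases haa : a = a'
    · subst haa; rfl
    · exfalso
      have htwP : TrueTwins P (a, b) (a', b) := trueTwins_prod H htw b
      obtain ⟨s, hsS, hsd⟩ := hSgen (a, b) (a', b) (by simp [haa])
      by_cases h1 : s = (a, b)
      · exact hab (h1 ▸ hsS)
      · by_cases h2 : s = (a', b)
        · exact hab' (h2 ▸ hsS)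
        · exact hsd (dist_eq_of_twins hP htwP h1 h2)
  have hcard : (Sᶜ : Set (α × β)).ncard ≤ numTrueTwinClasses G * Fintype.card β := by
    have := Nat.card_le_card_of_injective _ hinj
    rw [Nat.card_prod] at this
    rw [← Nat.card_coe_set_eq]
    calc Nat.card (Sᶜ : Set (α × β)) ≤ Nat.card Q * Nat.card β := this
      _ = numTrueTwinClasses G * Fintype.card β := by
          unfold numTrueTwinClasses
          rw [Nat.card_eq_fintype_card (α := β)]
  have hsum : S.ncard + (Sᶜ : Set (α × β)).ncard = Fintype.card α * Fintype.card β := by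
    rw [Set.ncard_add_ncard_compl, Nat.card_eq_fintype_card, Fintype.card_prod]
  have ht1 : numTrueTwinClasses G ≤ Fintype.card α := by
    have hsurj : Function.Surjective (Quotient.mk _ : α → Q) := fun q => Quotient.exists_rep q
    have h2 : Nat.card Q ≤ Nat.card α := Nat.card_le_card_of_surjective _ hsurj
    rw [Nat.card_eq_fintype_card (α := α)] at h2
    exact h2
  have e : Fintype.card β * (Fintype.card α - numTrueTwinClasses G)
      = Fintype.card α * Fintype.card β - numTrueTwinClasses G * Fintype.card β := by
    rw [Nat.mul_sub_left_distrib, Nat.mul_comm (Fintype.card β) (Fintype.card α),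
      Nat.mul_comm (Fintype.card β) (numTrueTwinClasses G)]
  rw [e]
  set A := Fintype.card α * Fintype.card β
  set B := numTrueTwinClasses G * Fintype.card β
  omega
end
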